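/- Let (X,d) be a metric space and let 𝒟 be a set of nonempty compact subsets of X. Then 𝒟 is compact in (K(X), H) if and only if the union D = ⋃{C : C ∈ 𝒟} is compact in X and 𝒟 is closed in (K(X), H). -/

import Mathlib

open Set Filter Metric Topology MeasureTheory

/-- The α-cut of a fuzzy set `u : X → ℝ`: for `α ≠ 0` it is `{x | u x ≥ α}`,
and for `α = 0` it is the closure of `{x | u x > 0}`. -/
noncomputable def cut {X : Type*} [MetricSpace X] (u : X → ℝ) (α : ℝ) : Set X :=
  if α = 0 then closure {x | 0 < u x} else {x | α ≤ u x}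

/-- `u` is a normal upper semicontinuous fuzzy set: it takes values in `[0,1]` and
all α-cuts (`α ∈ [0,1]`) are nonempty and closed. -/
def FUSC {X : Type*} [MetricSpace X] (u : X → ℝ) : Prop :=
  (∀ x, u x ∈ Set.Icc (0:ℝ) 1) ∧
    ∀ α ∈ Set.Icc (0:ℝ) 1, (cut u α).Nonempty ∧ IsClosed (cut u α)

/-- `F_USCG(X)`: fuzzy sets in `F_USC(X)` with compact positive α-cuts. -/
def FUSCG {X : Type*} [MetricSpace X] (u : X → ℝ) : Prop :=
  FUSC u ∧ ∀ α ∈ Set.Ioc (0:ℝ) 1, IsCompact (cut u α)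

/-- `F_USCB(X)`: fuzzy sets in `F_USC(X)` with compact support. -/
def FUSCB {X : Type*} [MetricSpace X] (u : X → ℝ) : Prop :=
  FUSC u ∧ IsCompact (cut u 0)

/-- Kuratowski lower limit of a sequence of sets. -/
def kurLiminf {Y : Type*} [MetricSpace Y] (C : ℕ → Set Y) : Set Y :=
  {y | ∃ f : ℕ → Y, (∀ n, f n ∈ C n) ∧ Tendsto f atTop (𝓝 y)}

/-- Kuratowski upper limit of a sequence of sets. -/
def kurLimsup {Y : Type*} [MetricSpace Y] (C : ℕ → Set Y) : Set Y :=
  {y | ∃ φ : ℕ → ℕ, StrictMono φ ∧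
        ∃ f : ℕ → Y, (∀ n, f n ∈ C (φ n)) ∧ Tendsto f atTop (𝓝 y)}

/-- Kuratowski convergence of a sequence of sets to a set. -/
def KurConv {Y : Type*} [MetricSpace Y] (C : ℕ → Set Y) (D : Set Y) : Prop :=
  kurLiminf C = D ∧ kurLimsup C = D

/-- The endograph of `u`: `{(x,t) ∈ X × [0,1] : u x ≥ t}`. -/
def endo {X : Type*} [MetricSpace X] (u : X → ℝ) : Set (X × ℝ) :=
  {p | p.2 ∈ Set.Icc (0:ℝ) 1 ∧ p.2 ≤ u p.1}

/-- The sendograph of `u`: `end u ∩ ([u]₀ × [0,1])`. -/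
noncomputable def sendo {X : Type*} [MetricSpace X] (u : X → ℝ) : Set (X × ℝ) :=
  endo u ∩ (cut u 0) ×ˢ (Set.Icc (0:ℝ) 1)

/-- Γ-convergence: Kuratowski convergence of endographs. -/
def GammaConv {X : Type*} [MetricSpace X] (un : ℕ → X → ℝ) (u : X → ℝ) : Prop :=
  KurConv (fun n => endo (un n)) (endo u)

/-- The endograph metric. -/
noncomputable def Hend {X : Type*} [MetricSpace X] (u v : X → ℝ) : ℝ :=
  hausdorffDist (endo u) (endo v)

/-- The sendograph metric. -/
noncomputable def Hsend {X : Type*} [MetricSpace X] (u v : X → ℝ) : ℝ :=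
  hausdorffDist (sendo u) (sendo v)

/-- The set of platform points of `u`:
`α ∈ (0,1)` with `closure {u > α}` a proper subset of `[u]_α`. -/
def Pset {X : Type*} [MetricSpace X] (u : X → ℝ) : Set ℝ :=
  {α | α ∈ Set.Ioo (0:ℝ) 1 ∧ closure {x | α < u x} ⊂ cut u α}

/-- `P₀(u)`: the set of `α ∈ (0,1)` such that `H([u]_β, [u]_α)` does not tend to `0`
as `β → α`. -/
def P0set {X : Type*} [MetricSpace X] (u : X → ℝ) : Set ℝ :=
  {α | α ∈ Set.Ioo (0:ℝ) 1 ∧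
    ¬ Tendsto (fun β => hausdorffDist (cut u β) (cut u α)) (𝓝[≠] α) (𝓝 0)}


open EMetric TopologicalSpace in
theorem compact_iff_union_compact_and_closed
    {X : Type*} [MetricSpace X] (𝒟 : Set (TopologicalSpace.NonemptyCompacts X)) :
    IsCompact 𝒟 ↔ IsCompact (⋃ C ∈ 𝒟, (C : Set X)) ∧ IsClosed 𝒟 := by
  constructor
  · intro h
    refine ⟨?_, h.isClosed⟩
    rw [isCompact_iff_isSeqCompact]
    intro x hx
    choose C hC hxC using fun n => mem_iUnion₂.1 (hx n)
    obtain ⟨D, hD, φ, hφ, hconv⟩ := h.isSeqCompact hC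
    have hed : Tendsto (fun n => edist (C (φ n)) D) atTop (𝓝 0) :=
      tendsto_iff_edist_tendsto_0.1 hconv
    have hinf : Tendsto (fun n => infEDist (x (φ n)) (D : Set X)) atTop (𝓝 0) :=
      tendsto_of_tendsto_of_tendsto_of_le_of_le tendsto_const_nhds hed
        (fun n => zero_le)
        (fun n => infEdist_le_hausdorffEdist_of_mem (hxC (φ n)))
    choose y hy hxy using fun n =>
      D.isCompact.exists_infEdist_eq_edist D.nonempty (x (φ n))
    obtain ⟨z, hz, ψ, hψ, hyz⟩ := D.isCompact.isSeqCompact hy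
    refine ⟨z, mem_iUnion₂.2 ⟨D, hD, hz⟩, φ ∘ ψ, hφ.comp hψ, ?_⟩
    rw [tendsto_iff_edist_tendsto_0]
    have h1 : Tendsto (fun n => edist (x (φ (ψ n))) (y (ψ n))) atTop (𝓝 0) := by
      have := hinf.comp hψ.tendsto_atTop
      simpa only [Function.comp_def, ← hxy] using this
    have h2 : Tendsto (fun n => edist (y (ψ n)) z) atTop (𝓝 0) :=
      tendsto_iff_edist_tendsto_0.1 hyz
    have h3 : Tendsto (fun n => edist (x (φ (ψ n))) (y (ψ n)) + edist (y (ψ n)) z)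
        atTop (𝓝 0) := by
      simpa using h1.add h2
    exact tendsto_of_tendsto_of_tendsto_of_le_of_le tendsto_const_nhds h3
      (fun n => zero_le) (fun n => edist_triangle _ _ _)
  · rintro ⟨hU, hclosed⟩
    rcases Set.eq_empty_or_nonempty 𝒟 with rfl | ⟨D0, hD0⟩
    · exact isCompact_empty
    set K : Set X := ⋃ C ∈ 𝒟, (C : Set X) with hK
    have hsub : ∀ C ∈ 𝒟, (C : Set X) ⊆ K := fun C hC => subset_biUnion_of_mem hC
    haveI : CompactSpace K := isCompact_iff_compactSpace.1 hU
    let ι : NonemptyCompacts K → NonemptyCompacts X := fun C =>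
      ⟨⟨Subtype.val '' (C : Set K), C.isCompact.image continuous_subtype_val⟩,
        C.nonempty.image _⟩
    have hisom : Isometry ι := fun C₁ C₂ =>
      EMetric.hausdorffEdist_image isometry_subtype_coe
    have hrange : 𝒟 ⊆ Set.range ι := by
      intro C hC
      have hCc : IsCompact (Subtype.val ⁻¹' (C : Set X) : Set K) :=
        (C.isCompact.isClosed.preimage continuous_subtype_val).isCompact
      have hCn : (Subtype.val ⁻¹' (C : Set X) : Set K).Nonempty := by
        obtain ⟨y, hy⟩ := C.nonempty
        exact ⟨⟨y, hsub C hC hy⟩, hy⟩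
      refine ⟨⟨⟨Subtype.val ⁻¹' (C : Set X), hCc⟩, hCn⟩, ?_⟩
      apply NonemptyCompacts.ext
      show (Subtype.val '' (Subtype.val ⁻¹' (C : Set X) : Set K)) = (C : Set X)
      rw [Subtype.image_preimage_val]
      exact Set.inter_eq_right.2 (hsub C hC)
    have hpre : IsCompact (ι ⁻¹' 𝒟) :=
      (hclosed.preimage hisom.continuous).isCompact
    have h𝒟 : 𝒟 = ι '' (ι ⁻¹' 𝒟) := by
      rw [Set.image_preimage_eq_inter_range, Set.inter_eq_left.2 hrange]
    rw [h𝒟]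
    exact hpre.image hisom.continuous
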